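/- Let V be an F-vector space with a bilinear form defined on a pyramid basis by ⟨e_α|e_β⟩ = ε_α δ_{α,β'}, where β' is the reflection of box β in its rectangle and ε : I → {±1} satisfies ε_α ε_{α'} = η and ε_α ε_β = −1 for horizontally adjacent boxes α,β. Then the form satisfies ⟨v|w⟩ = η⟨w|v⟩ for all v,w ∈ V; the left-shift operator f and the right-shift operator f^T are skew-adjoint with respect to this form; and the adjoint of the elementary matrix E_{α,β} is ε_α ε_β E_{β',α'}. -/

import Mathlib

open Matrix

/-- Boxes of the symmetric pyramid. -/
abbrev PBox (s : ℕ) (p r : Fin s → ℕ) : Type := Σ i : Fin s, Fin (r i) × Fin (p i)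

variable {F : Type*} [Field F]

/-- The left-shift operator `f`. -/
def shiftL {s : ℕ} (p r : Fin s → ℕ) : Matrix (PBox s p r) (PBox s p r) F :=
  fun b' b => if b'.1 = b.1 ∧ (b'.2.1 : ℕ) = (b.2.1 : ℕ) ∧
      (b'.2.2 : ℕ) = (b.2.2 : ℕ) + 1 then 1 else 0

/-- The right-shift operator `fᵀ`. -/
def shiftR {s : ℕ} (p r : Fin s → ℕ) : Matrix (PBox s p r) (PBox s p r) F :=
  fun b' b => if b'.1 = b.1 ∧ (b'.2.1 : ℕ) = (b.2.1 : ℕ) ∧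
      (b'.2.2 : ℕ) + 1 = (b.2.2 : ℕ) then 1 else 0

/-- The reflection `α ↦ α'` of a box with respect to the center of its rectangle. -/
def reflect {s : ℕ} {p r : Fin s → ℕ} (b : PBox s p r) : PBox s p r :=
  ⟨b.1, (b.2.1.rev, b.2.2.rev)⟩

/-- The Gram matrix of the bilinear form `⟨e_α | e_β⟩ = ε_α δ_{α,β'}`. -/
def formM {s : ℕ} (p r : Fin s → ℕ) (ε : PBox s p r → F) :
    Matrix (PBox s p r) (PBox s p r) F :=
  fun α β => if β = reflect α then ε α else 0


lemma reflect_reflect {s : ℕ} {p r : Fin s → ℕ} (b : PBox s p r) :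
    reflect (reflect b) = b := by
  rcases b with ⟨i, j, k⟩; simp [reflect]

lemma formM_apply' {s : ℕ} {p r : Fin s → ℕ} (ε : PBox s p r → F) (γ β : PBox s p r) :
    formM p r ε γ β = if γ = reflect β then ε γ else 0 := by
  have : β = reflect γ ↔ γ = reflect β := by
    constructor <;> intro h <;> rw [h, reflect_reflect]
  simp [formM, this]

lemma mulVec_dot {n : Type*} [Fintype n] [DecidableEq n]
    (A : Matrix n n F) (v u : n → F) :
    (A *ᵥ v) ⬝ᵥ u = v ⬝ᵥ (Aᵀ *ᵥ u) := by
  rw [← Matrix.vecMul_transpose, Matrix.dotProduct_mulVec]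

lemma sumL {s : ℕ} (p r : Fin s → ℕ) (ε : PBox s p r → F)
    (A : Matrix (PBox s p r) (PBox s p r) F) (x y : PBox s p r) :
    (Aᵀ * formM p r ε) x y = A (reflect y) x * ε (reflect y) := by
  rw [Matrix.mul_apply]
  rw [Finset.sum_congr rfl (fun γ _ => by
    rw [Matrix.transpose_apply, formM_apply', mul_ite, mul_zero])]
  simp

lemma sumR {s : ℕ} (p r : Fin s → ℕ) (ε : PBox s p r → F)
    (A : Matrix (PBox s p r) (PBox s p r) F) (x y : PBox s p r) :
    (formM p r ε * A) x y = ε x * A (reflect x) y := by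
  rw [Matrix.mul_apply]
  simp [formM, ite_mul]

lemma eps_neg {a c : F} (hx : a * a = 1) (h : a * c = -1) : c = -a := by
  have : c = a * (a * c) := by rw [← mul_assoc, hx, one_mul]
  rw [this, h]; ring

section mainAux
variable {s : ℕ} {p r : Fin s → ℕ} {ε : PBox s p r → F}

lemma eps_sq (hε0 : ∀ α : PBox s p r, ε α = 1 ∨ ε α = -1) (α : PBox s p r) :
    ε α * ε α = 1 := by rcases hε0 α with h | h <;> rw [h] <;> ring

lemma M1 {η : F} (hε0 : ∀ α : PBox s p r, ε α = 1 ∨ ε α = -1)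
    (hε1 : ∀ α : PBox s p r, ε α * ε (reflect α) = η) :
    (formM p r ε)ᵀ = η • formM p r ε := by
  ext x y
  rw [Matrix.transpose_apply, Matrix.smul_apply, formM_apply', formM]
  by_cases h : y = reflect x
  · rw [if_pos h, if_pos h, h]
    have h1 := eps_sq hε0 x
    have h2 := hε1 x
    have h3 : ε (reflect x) = ε x * (ε x * ε (reflect x)) := by
      rw [← mul_assoc, h1, one_mul]
    rw [h3, h2, smul_eq_mul]; ring
  · rw [if_neg h, if_neg h, smul_zero]

lemma M2 (hε0 : ∀ α : PBox s p r, ε α = 1 ∨ ε α = -1)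
    (hε2 : ∀ (i : Fin s) (j : Fin (r i)) (k k' : Fin (p i)),
      (k : ℕ) + 1 = (k' : ℕ) →
      ε ⟨i, (j, k)⟩ * ε ⟨i, (j, k')⟩ = -1) :
    (shiftL (F := F) p r)ᵀ * formM p r ε = -(formM p r ε * shiftL p r) := by
  ext x y
  rw [sumL, Matrix.neg_apply, sumR]
  rcases x with ⟨i, j, k⟩
  rcases y with ⟨i', j', k'⟩
  by_cases hi : i' = i
  · subst hi
    have hk := k.isLt; have hk' := k'.isLt; have hj := j.isLt; have hj' := j'.isLt
    simp only [shiftL, reflect, Fin.val_rev]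
    by_cases hA : r i' - ((j' : ℕ) + 1) = (j : ℕ) ∧ p i' - ((k' : ℕ) + 1) = (k : ℕ) + 1
    · rw [if_pos ⟨trivial, hA⟩, if_pos ⟨trivial, by omega, by omega⟩]
      have hjj : j'.rev = j := Fin.ext (by simp only [Fin.val_rev]; omega)
      have hadj := hε2 i' j k k'.rev (by simp only [Fin.val_rev]; omega)
      have hbx : (⟨i', (j'.rev, k'.rev)⟩ : PBox s p r) = ⟨i', (j, k'.rev)⟩ := by rw [hjj]
      rw [hbx, eps_neg (eps_sq hε0 _) hadj]; ring
    · rw [if_neg (by rintro ⟨-, h⟩; exact hA h),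
        if_neg (by rintro ⟨-, ha, hb⟩; exact hA ⟨by omega, by omega⟩)]
      ring
  · simp only [shiftL, reflect]
    simp only [hi, Ne.symm hi, false_and, if_false]
    ring

lemma M3 (hε0 : ∀ α : PBox s p r, ε α = 1 ∨ ε α = -1)
    (hε2 : ∀ (i : Fin s) (j : Fin (r i)) (k k' : Fin (p i)),
      (k : ℕ) + 1 = (k' : ℕ) →
      ε ⟨i, (j, k)⟩ * ε ⟨i, (j, k')⟩ = -1) :
    (shiftR (F := F) p r)ᵀ * formM p r ε = -(formM p r ε * shiftR p r) := by
  ext x y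
  rw [sumL, Matrix.neg_apply, sumR]
  rcases x with ⟨i, j, k⟩
  rcases y with ⟨i', j', k'⟩
  by_cases hi : i' = i
  · subst hi
    have hk := k.isLt; have hk' := k'.isLt; have hj := j.isLt; have hj' := j'.isLt
    simp only [shiftR, reflect, Fin.val_rev]
    by_cases hA : r i' - ((j' : ℕ) + 1) = (j : ℕ) ∧ p i' - ((k' : ℕ) + 1) + 1 = (k : ℕ)
    · rw [if_pos ⟨trivial, hA⟩, if_pos ⟨trivial, by omega, by omega⟩]
      have hjj : j'.rev = j := Fin.ext (by simp only [Fin.val_rev]; omega)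
      have hadj := hε2 i' j k'.rev k (by simp only [Fin.val_rev]; omega)
      have hbx : (⟨i', (j'.rev, k'.rev)⟩ : PBox s p r) = ⟨i', (j, k'.rev)⟩ := by rw [hjj]
      have hc2 : ε ⟨i', (j, k)⟩ * ε ⟨i', (j, k'.rev)⟩ = -1 := by
        rw [mul_comm]; exact hadj
      rw [hbx, eps_neg (eps_sq hε0 ⟨i', (j, k)⟩) hc2]; ring
    · rw [if_neg (by rintro ⟨-, h⟩; exact hA h),
        if_neg (by rintro ⟨-, ha, hb⟩; exact hA ⟨by omega, by omega⟩)]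
      ring
  · simp only [shiftR, reflect]
    simp only [hi, Ne.symm hi, false_and, if_false]
    ring

lemma M4 (hε0 : ∀ α : PBox s p r, ε α = 1 ∨ ε α = -1) (α β : PBox s p r) :
    (Matrix.single α β (1 : F))ᵀ * formM p r ε =
      formM p r ε * ((ε α * ε β) • Matrix.single (reflect β) (reflect α) (1 : F)) := by
  ext x y
  rw [sumL, sumR]
  simp only [Matrix.smul_apply, Matrix.single, Matrix.of_apply, smul_ite, smul_zero]
  by_cases hc : x = β ∧ y = reflect α
  · obtain ⟨rfl, rfl⟩ := hc
    rw [if_pos ⟨(reflect_reflect α).symm, rfl⟩, if_pos ⟨rfl, rfl⟩, reflect_reflect,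
      smul_eq_mul, mul_one, one_mul]
    linear_combination (-(ε α)) * (eps_sq hε0 x)
  · rw [if_neg (by rintro ⟨h1, h2⟩; exact hc ⟨h2.symm, by rw [h1, reflect_reflect]⟩),
      if_neg (by
        rintro ⟨h1, h2⟩
        refine hc ⟨?_, h2.symm⟩
        have := congrArg reflect h1
        rwa [reflect_reflect, reflect_reflect, eq_comm] at this)]
    ring

end mainAux

/-- With `ε : I → {±1}` satisfying `ε_α ε_{α'} = η` and
`ε_α ε_β = −1` for horizontally adjacent boxes, the bilinear form
`⟨e_α|e_β⟩ = ε_α δ_{α,β'}` is `η`-symmetric, the shift operators `f` and `fᵀ` are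
skew-adjoint with respect to it, and the adjoint of `E_{α,β}` is
`ε_α ε_β E_{β',α'}`. -/
theorem pyramid_form_properties
    {s : ℕ} (p r : Fin s → ℕ)
    (η : F) (hη : η = 1 ∨ η = -1)
    (ε : PBox s p r → F)
    (hε0 : ∀ α : PBox s p r, ε α = 1 ∨ ε α = -1)
    (hε1 : ∀ α : PBox s p r, ε α * ε (reflect α) = η)
    (hε2 : ∀ (i : Fin s) (j : Fin (r i)) (k k' : Fin (p i)),
      (k : ℕ) + 1 = (k' : ℕ) →
      ε ⟨i, (j, k)⟩ * ε ⟨i, (j, k')⟩ = -1) :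
    (∀ v w : PBox s p r → F,
      v ⬝ᵥ (formM p r ε *ᵥ w) = η * (w ⬝ᵥ (formM p r ε *ᵥ v))) ∧
    (∀ v w : PBox s p r → F,
      (shiftL (F := F) p r *ᵥ v) ⬝ᵥ (formM p r ε *ᵥ w) =
        -(v ⬝ᵥ (formM p r ε *ᵥ (shiftL (F := F) p r *ᵥ w)))) ∧
    (∀ v w : PBox s p r → F,
      (shiftR (F := F) p r *ᵥ v) ⬝ᵥ (formM p r ε *ᵥ w) =
        -(v ⬝ᵥ (formM p r ε *ᵥ (shiftR (F := F) p r *ᵥ w)))) ∧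
    (∀ (α β : PBox s p r) (v w : PBox s p r → F),
      (Matrix.single α β (1 : F) *ᵥ v) ⬝ᵥ (formM p r ε *ᵥ w) =
        v ⬝ᵥ (formM p r ε *ᵥ
          (((ε α * ε β) • Matrix.single (reflect β) (reflect α) (1 : F)) *ᵥ w))) := by
  refine ⟨?_, ?_, ?_, ?_⟩
  · intro v w
    rw [dotProduct_comm, mulVec_dot, M1 hε0 hε1, Matrix.smul_mulVec,
      dotProduct_smul, smul_eq_mul]
  · intro v w
    rw [mulVec_dot, Matrix.mulVec_mulVec, M2 hε0 hε2, Matrix.neg_mulVec, dotProduct_neg,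
      ← Matrix.mulVec_mulVec]
  · intro v w
    rw [mulVec_dot, Matrix.mulVec_mulVec, M3 hε0 hε2, Matrix.neg_mulVec, dotProduct_neg,
      ← Matrix.mulVec_mulVec]
  · intro α β v w
    rw [mulVec_dot, Matrix.mulVec_mulVec, M4 hε0 α β, ← Matrix.mulVec_mulVec]
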